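/- Let n ≥ 2. If y = Φ_n(a,b,z) and η = Ψ_n(α,β,x), with a > 0, α > 0, b, β ∈ ℝ, z ∈ P_{A_{n−1}}, x ∈ Q_{A_{n−1}}, then tr(yη) = aα + a·x_{22}·(b+β)² + tr(zx). -/

import Mathlib

open Matrix

noncomputable section

/-- Tridiagonal symmetric real `n × n` matrices (the space `Z_G` for `G = A_n`). -/
def ZG (n : ℕ) : Set (Matrix (Fin n) (Fin n) ℝ) :=
  {y | y.IsSymm ∧ ∀ i j : Fin n, ((i : ℕ) + 1 < (j : ℕ) ∨ (j : ℕ) + 1 < (i : ℕ)) → y i j = 0}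

/-- The cone `P_G` of positive definite matrices in `Z_G`. -/
def PG (n : ℕ) : Set (Matrix (Fin n) (Fin n) ℝ) :=
  {y | y ∈ ZG n ∧ y.PosDef}

/-- The dual cone `Q_G`. -/
def QG (n : ℕ) : Set (Matrix (Fin n) (Fin n) ℝ) :=
  {η | η ∈ ZG n ∧ (∀ i : Fin n, 0 < η i i) ∧
    ∀ i j : Fin n, (i : ℕ) + 1 = (j : ℕ) → 0 < η i i * η j j - (η i j) ^ 2}

/-- The recurrent-construction map `Φ` for the cones `P`. -/
def Phi {n : ℕ} (a b : ℝ) (z : Matrix (Fin (n + 1)) (Fin (n + 1)) ℝ) :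
    Matrix (Fin (n + 2)) (Fin (n + 2)) ℝ :=
  Matrix.of fun i j =>
    if (i : ℕ) = 0 ∧ (j : ℕ) = 0 then a
    else if ((i : ℕ) = 0 ∧ (j : ℕ) = 1) ∨ ((i : ℕ) = 1 ∧ (j : ℕ) = 0) then a * b
    else if (i : ℕ) = 0 ∨ (j : ℕ) = 0 then 0
    else (if (i : ℕ) = 1 ∧ (j : ℕ) = 1 then a * b ^ 2 else 0) +
      z ⟨(i : ℕ) - 1, by have := i.isLt; omega⟩ ⟨(j : ℕ) - 1, by have := j.isLt; omega⟩

/-- The recurrent-construction map `Ψ` for the cones `Q`. -/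
def Psi {n : ℕ} (α β : ℝ) (x : Matrix (Fin (n + 1)) (Fin (n + 1)) ℝ) :
    Matrix (Fin (n + 2)) (Fin (n + 2)) ℝ :=
  Matrix.of fun i j =>
    if (i : ℕ) = 0 ∧ (j : ℕ) = 0 then α + β ^ 2 * x 0 0
    else if ((i : ℕ) = 0 ∧ (j : ℕ) = 1) ∨ ((i : ℕ) = 1 ∧ (j : ℕ) = 0) then β * x 0 0
    else if (i : ℕ) = 0 ∨ (j : ℕ) = 0 then 0
    else x ⟨(i : ℕ) - 1, by have := i.isLt; omega⟩ ⟨(j : ℕ) - 1, by have := j.isLt; omega⟩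


lemma Phi_ss {n : ℕ} (a b : ℝ) (z : Matrix (Fin (n + 1)) (Fin (n + 1)) ℝ) (i j : Fin (n+1)) :
    Phi a b z i.succ j.succ = (if i = 0 ∧ j = 0 then a * b ^ 2 else 0) + z i j := by
  simp [Phi, Fin.ext_iff, -Fin.val_eq_zero_iff]
lemma Psi_ss {n : ℕ} (α β : ℝ) (x : Matrix (Fin (n + 1)) (Fin (n + 1)) ℝ) (i j : Fin (n+1)) :
    Psi α β x i.succ j.succ = x i j := by
  simp [Psi, Fin.ext_iff, -Fin.val_eq_zero_iff]
lemma Phi_s0 {n : ℕ} (a b : ℝ) (z : Matrix (Fin (n + 1)) (Fin (n + 1)) ℝ) (i : Fin (n+1)) :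
    Phi a b z i.succ 0 = if i = 0 then a * b else 0 := by
  simp [Phi, Fin.ext_iff, -Fin.val_eq_zero_iff]
lemma Phi_0s {n : ℕ} (a b : ℝ) (z : Matrix (Fin (n + 1)) (Fin (n + 1)) ℝ) (i : Fin (n+1)) :
    Phi a b z 0 i.succ = if i = 0 then a * b else 0 := by
  simp [Phi, Fin.ext_iff, -Fin.val_eq_zero_iff]
lemma Psi_0s {n : ℕ} (α β : ℝ) (x : Matrix (Fin (n + 1)) (Fin (n + 1)) ℝ) (i : Fin (n+1)) :
    Psi α β x 0 i.succ = if i = 0 then β * x 0 0 else 0 := by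
  simp [Psi, Fin.ext_iff, -Fin.val_eq_zero_iff]
lemma Psi_s0 {n : ℕ} (α β : ℝ) (x : Matrix (Fin (n + 1)) (Fin (n + 1)) ℝ) (i : Fin (n+1)) :
    Psi α β x i.succ 0 = if i = 0 then β * x 0 0 else 0 := by
  simp [Psi, Fin.ext_iff, -Fin.val_eq_zero_iff]

/-- If `y = Φ(a, b, z)` and `η = Ψ(α, β, x)`, then
`tr(yη) = aα + a x₂₂ (b + β)² + tr(zx)` (here `x₂₂ = x 0 0` after relabelling). -/
theorem stmt6 (n : ℕ) (a b α β : ℝ) (ha : 0 < a) (hα : 0 < α)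
    (z x : Matrix (Fin (n + 1)) (Fin (n + 1)) ℝ) (hz : z ∈ PG (n + 1)) (hx : x ∈ QG (n + 1)) :
    Matrix.trace (Phi a b z * Psi α β x) =
      a * α + a * x 0 0 * (b + β) ^ 2 + Matrix.trace (z * x) := by
  have hPhi00 : Phi a b z 0 0 = a := by simp [Phi]
  have hPsi00 : Psi α β x 0 0 = α + β ^ 2 * x 0 0 := by simp [Psi]
  simp only [Matrix.trace, Matrix.mul_apply, Matrix.diag]
  rw [Fin.sum_univ_succ (f := fun i : Fin (n+2) => _)]
  rw [Fin.sum_univ_succ (f := fun j : Fin (n+2) => Phi a b z 0 j * Psi α β x j 0)]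
  simp only [hPhi00, hPsi00, Phi_0s, Psi_s0, Phi_s0, Psi_0s, Phi_ss, Psi_ss]
  simp only [Fin.sum_univ_succ (n := n+1)]
  simp only [Phi_s0, Psi_0s, Phi_ss, Psi_ss, ite_mul, mul_ite, zero_mul, mul_zero,
    Finset.sum_ite_eq', Finset.mem_univ, if_true, add_mul, Finset.sum_add_distrib]
  have : ∀ i : Fin (n+1), ∑ j : Fin (n+1),
      (if i = 0 ∧ j = 0 then a * b ^ 2 * x j i else 0) =
      if i = 0 then a * b ^ 2 * x 0 0 else 0 := by
    intro i
    by_cases hi : i = 0 <;> simp [hi]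
  simp only [this, Finset.sum_ite_eq', Finset.mem_univ, if_true]
  ring
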